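/- In the commutative ring R = Z[u,v,t,x]/⟨tx² = tx − x, ux = tx, vx = tx⟩, the elements u^p v^q t^i (for p,q,i ≥ 0), t^i x (for i ≥ 0), and x^i (for i ≥ 2) form a Z-linear basis of R. -/

import Mathlib

noncomputable section
open MvPolynomial

/-- The variables `u, v, t, x` of `ℤ[u,v,t,x]`. -/
abbrev uP : MvPolynomial (Fin 4) ℤ := X 0
abbrev vP : MvPolynomial (Fin 4) ℤ := X 1
abbrev tP : MvPolynomial (Fin 4) ℤ := X 2
abbrev xP : MvPolynomial (Fin 4) ℤ := X 3

/-- The ideal of relations `tx² = tx − x`, `ux = tx`, `vx = tx`. -/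
def relIdeal : Ideal (MvPolynomial (Fin 4) ℤ) :=
  Ideal.span {tP * xP ^ 2 - (tP * xP - xP), uP * xP - tP * xP, vP * xP - tP * xP}

/-- The ring `R = ℤ[u,v,t,x]/⟨tx² = tx − x, ux = tx, vx = tx⟩`. -/
abbrev RRing : Type := MvPolynomial (Fin 4) ℤ ⧸ relIdeal

/-- The quotient map `ℤ[u,v,t,x] → R`. -/
def mkR : MvPolynomial (Fin 4) ℤ →+* RRing := Ideal.Quotient.mk relIdeal

/-- The claimed basis family: `u^p v^q t^i` for `p,q,i ≥ 0`, `t^i x` for `i ≥ 0`,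
and `x^i` for `i ≥ 2`. -/
def basFam : ((ℕ × ℕ × ℕ) ⊕ ℕ ⊕ {i : ℕ // 2 ≤ i}) → RRing
  | .inl (p, q, i) => mkR (uP ^ p * vP ^ q * tP ^ i)
  | .inr (.inl i) => mkR (tP ^ i * xP)
  | .inr (.inr i) => mkR (xP ^ (i : ℕ))

/-! ### Auxiliary definitions -/

abbrev Idx : Type := (ℕ × ℕ × ℕ) ⊕ ℕ ⊕ {i : ℕ // 2 ≤ i}
abbrev FMod : Type := Idx →₀ ℤ

/-- Normal form of `t^k x^j`. -/
def NF : ℕ → ℕ → FMod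
  | k, 0 => Finsupp.single (.inl (0,0,k)) 1
  | k, 1 => Finsupp.single (.inr (.inl k)) 1
  | 0, (j+2) => Finsupp.single (.inr (.inr ⟨j+2, by omega⟩)) 1
  | (k+1), (j+2) => NF (k+1) (j+1) - NF k (j+1)

/-- Normal form of `u^p v^q t^i x^j`. -/
def nf4 (p q i : ℕ) : ℕ → FMod
  | 0 => Finsupp.single (.inl (p,q,i)) 1
  | (j+1) => NF (p+q+i) (j+1)

def nfExp (d : Fin 4 →₀ ℕ) : FMod := nf4 (d 0) (d 1) (d 2) (d 3)

def T : MvPolynomial (Fin 4) ℤ →ₗ[ℤ] FMod :=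
  (MvPolynomial.basisMonomials (Fin 4) ℤ).constr ℤ nfExp

lemma T_monomial (d : Fin 4 →₀ ℕ) (c : ℤ) : T (monomial d c) = c • nfExp d := by
  have h1 : (monomial d c : MvPolynomial (Fin 4) ℤ) = c • monomial d 1 := by
    rw [MvPolynomial.smul_monomial, smul_eq_mul, mul_one]
  rw [h1, map_smul]
  congr 1
  have : (monomial d 1 : MvPolynomial (Fin 4) ℤ) = MvPolynomial.basisMonomials (Fin 4) ℤ d := by
    rw [coe_basisMonomials]
  rw [this]
  exact (MvPolynomial.basisMonomials (Fin 4) ℤ).constr_basis ℤ nfExp d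

def quad (p q i j : ℕ) : Fin 4 →₀ ℕ :=
  Finsupp.single 0 p + Finsupp.single 1 q + Finsupp.single 2 i + Finsupp.single 3 j

lemma quad_eta (d : Fin 4 →₀ ℕ) : quad (d 0) (d 1) (d 2) (d 3) = d := by
  ext a
  fin_cases a <;> simp [quad, Finsupp.single_apply]

lemma monomial_quad (p q i j : ℕ) :
    (monomial (quad p q i j) 1 : MvPolynomial (Fin 4) ℤ) = uP^p * vP^q * tP^i * xP^j := by
  simp [quad, X_pow_eq_monomial, monomial_mul]

lemma nfExp_quad (p q i j : ℕ) : nfExp (quad p q i j) = nf4 p q i j := by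
  have h0 : quad p q i j 0 = p := by simp [quad, Finsupp.single_apply]
  have h1 : quad p q i j 1 = q := by simp [quad, Finsupp.single_apply]
  have h2 : quad p q i j 2 = i := by simp [quad, Finsupp.single_apply]
  have h3 : quad p q i j 3 = j := by simp [quad, Finsupp.single_apply]
  rw [nfExp, h0, h1, h2, h3]

lemma T_quad (p q i j : ℕ) : T (monomial (quad p q i j) 1) = nf4 p q i j := by
  rw [T_monomial, nfExp_quad, one_smul]

lemma T_uvtx (p q i j : ℕ) : T (uP^p * vP^q * tP^i * xP^j) = nf4 p q i j := by
  rw [← monomial_quad, T_quad]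

lemma Tg1 (p q i j : ℕ) :
    T (uP^p * vP^q * tP^i * xP^j * (tP * xP ^ 2 - (tP * xP - xP))) = 0 := by
  have hpoly : uP^p * vP^q * tP^i * xP^j * (tP * xP ^ 2 - (tP * xP - xP)) =
      uP^p * vP^q * tP^(i+1) * xP^(j+2) - uP^p * vP^q * tP^(i+1) * xP^(j+1)
        + uP^p * vP^q * tP^i * xP^(j+1) := by ring
  rw [hpoly, map_add, map_sub, T_uvtx, T_uvtx, T_uvtx]
  have e1 : p + q + (i+1) = (p+q+i) + 1 := by omega
  simp only [nf4, e1]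
  rw [show NF (p+q+i+1) (j+2) = NF (p+q+i+1) (j+1) - NF (p+q+i) (j+1) from rfl]
  abel

lemma Tg2 (p q i j : ℕ) :
    T (uP^p * vP^q * tP^i * xP^j * (uP * xP - tP * xP)) = 0 := by
  have hpoly : uP^p * vP^q * tP^i * xP^j * (uP * xP - tP * xP) =
      uP^(p+1) * vP^q * tP^i * xP^(j+1) - uP^p * vP^q * tP^(i+1) * xP^(j+1) := by ring
  rw [hpoly, map_sub, T_uvtx, T_uvtx]
  have e1 : p + 1 + q + i = p + q + (i+1) := by omega
  simp only [nf4, e1, sub_self]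

lemma Tg3 (p q i j : ℕ) :
    T (uP^p * vP^q * tP^i * xP^j * (vP * xP - tP * xP)) = 0 := by
  have hpoly : uP^p * vP^q * tP^i * xP^j * (vP * xP - tP * xP) =
      uP^p * vP^(q+1) * tP^i * xP^(j+1) - uP^p * vP^q * tP^(i+1) * xP^(j+1) := by ring
  rw [hpoly, map_sub, T_uvtx, T_uvtx]
  have e1 : p + (q+1) + i = p + q + (i+1) := by omega
  simp only [nf4, e1, sub_self]

lemma T_mul_gen (g : MvPolynomial (Fin 4) ℤ)
    (hg : ∀ p q i j : ℕ, T (uP^p * vP^q * tP^i * xP^j * g) = 0)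
    (f : MvPolynomial (Fin 4) ℤ) : T (f * g) = 0 := by
  induction f using MvPolynomial.induction_on' with
  | monomial d c =>
    have h1 : (monomial d c : MvPolynomial (Fin 4) ℤ) = c • monomial d 1 := by
      rw [MvPolynomial.smul_monomial, smul_eq_mul, mul_one]
    rw [h1, smul_mul_assoc, map_smul]
    have := hg (d 0) (d 1) (d 2) (d 3)
    rw [← monomial_quad, quad_eta] at this
    rw [this, smul_zero]
  | add f1 f2 h1 h2 => rw [add_mul, map_add, h1, h2, add_zero]

/-- `T` kills the relation ideal. -/
lemma T_zero_of_mem {f : MvPolynomial (Fin 4) ℤ} (hf : f ∈ relIdeal) : T f = 0 := by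
  let K : Ideal (MvPolynomial (Fin 4) ℤ) :=
    { carrier := {f | ∀ g, T (g * f) = 0}
      add_mem' := fun {a b} ha hb g => by rw [mul_add, map_add, ha g, hb g, add_zero]
      zero_mem' := fun g => by rw [mul_zero, map_zero]
      smul_mem' := fun c f hf g => by
        rw [smul_eq_mul, ← mul_assoc]; exact hf (g * c) }
  have hK : relIdeal ≤ K := by
    rw [relIdeal, Ideal.span_le]
    rintro g (rfl | rfl | rfl)
    · exact fun f => T_mul_gen _ Tg1 f
    · exact fun f => T_mul_gen _ Tg2 f
    · exact fun f => T_mul_gen _ Tg3 f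
  have := hK hf 1
  rwa [one_mul] at this

/-- Polynomial representatives of the basis family. -/
def polyOf : Idx → MvPolynomial (Fin 4) ℤ
  | .inl (p, q, i) => uP ^ p * vP ^ q * tP ^ i
  | .inr (.inl i) => tP ^ i * xP
  | .inr (.inr i) => xP ^ (i : ℕ)

lemma basFam_eq (e : Idx) : basFam e = mkR (polyOf e) := by
  rcases e with ⟨p, q, i⟩ | i | i <;> rfl

lemma T_polyOf (e : Idx) : T (polyOf e) = Finsupp.single e 1 := by
  rcases e with ⟨p, q, i⟩ | i | ⟨i, hi⟩
  · have : polyOf (.inl (p,q,i)) = uP^p * vP^q * tP^i * xP^0 := by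
      simp [polyOf]
    rw [this, T_uvtx]; rfl
  · have : polyOf (.inr (.inl i)) = uP^0 * vP^0 * tP^i * xP^1 := by
      simp [polyOf]
    rw [this, T_uvtx]
    show NF (0+0+i) 1 = _
    rw [show (0+0+i) = i from by omega]
    cases i <;> simp [NF]
  · obtain ⟨j, rfl⟩ : ∃ j, i = j + 2 := ⟨i - 2, by omega⟩
    have : polyOf (.inr (.inr ⟨j+2, hi⟩)) = uP^0 * vP^0 * tP^0 * xP^(j+2) := by
      simp [polyOf]
    rw [this, T_uvtx]
    show NF (0+0+0) (j+2) = _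
    rw [show (0+0+0 : ℕ) = 0 from rfl]
    simp [NF]

lemma li_basFam : LinearIndependent ℤ basFam := by
  rw [linearIndependent_iff]
  intro l hl
  have h1 : Finsupp.linearCombination ℤ basFam l = mkR (l.sum fun e c => c • polyOf e) := by
    rw [Finsupp.linearCombination_apply, map_finsuppSum]
    exact Finsupp.sum_congr fun e _ => by rw [basFam_eq, map_zsmul]
  rw [h1] at hl
  have hmem : (l.sum fun e c => c • polyOf e) ∈ relIdeal :=
    (Ideal.Quotient.eq_zero_iff_mem).mp hl
  have hT := T_zero_of_mem hmem
  rw [map_finsuppSum] at hT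
  have h2 : (l.sum fun e c => T (c • polyOf e)) = l := by
    have heq : (fun (e : Idx) (c : ℤ) => T (c • polyOf e)) = fun e c => Finsupp.single e c := by
      funext e c
      rw [map_smul, T_polyOf, Finsupp.smul_single, smul_eq_mul, mul_one]
    rw [heq, Finsupp.sum_single]
  rw [h2] at hT
  exact hT

lemma g1_mem : tP * xP ^ 2 - (tP * xP - xP) ∈ relIdeal :=
  Ideal.subset_span (by simp)
lemma g2_mem : uP * xP - tP * xP ∈ relIdeal :=
  Ideal.subset_span (by simp)
lemma g3_mem : vP * xP - tP * xP ∈ relIdeal :=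
  Ideal.subset_span (by simp)

lemma mkR_eq {a b : MvPolynomial (Fin 4) ℤ} (h : a - b ∈ relIdeal) : mkR a = mkR b :=
  show Ideal.Quotient.mk relIdeal a = Ideal.Quotient.mk relIdeal b from Ideal.Quotient.eq.mpr h

lemma key_tx : ∀ j k : ℕ, mkR (tP ^ k * xP ^ (j+1)) ∈ Submodule.span ℤ (Set.range basFam) := by
  intro j
  induction j with
  | zero =>
    intro k
    have : mkR (tP ^ k * xP ^ 1) = basFam (.inr (.inl k)) := by
      rw [basFam_eq]; norm_num [polyOf]
    rw [this]
    exact Submodule.subset_span ⟨_, rfl⟩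
  | succ j ih =>
    intro k
    match k with
    | 0 =>
      have : mkR (tP ^ 0 * xP ^ (j+2)) = basFam (.inr (.inr ⟨j+2, by omega⟩)) := by
        rw [basFam_eq]; norm_num [polyOf]
      rw [this]
      exact Submodule.subset_span ⟨_, rfl⟩
    | k + 1 =>
      have hrel : mkR (tP ^ (k+1) * xP ^ (j+2)) =
          mkR (tP ^ (k+1) * xP ^ (j+1)) - mkR (tP ^ k * xP ^ (j+1)) := by
        rw [← map_sub]
        apply mkR_eq
        have : tP ^ (k+1) * xP ^ (j+2) - (tP ^ (k+1) * xP ^ (j+1) - tP ^ k * xP ^ (j+1)) =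
            (tP ^ k * xP ^ j) * (tP * xP ^ 2 - (tP * xP - xP)) := by ring
        rw [this]
        exact Ideal.mul_mem_left _ _ g1_mem
      rw [hrel]
      exact sub_mem (ih (k+1)) (ih k)

lemma red_u : ∀ p q i j : ℕ,
    mkR (uP^p * vP^q * tP^i * xP^(j+1)) = mkR (tP^(p+q+i) * xP^(j+1)) := by
  intro p
  induction p with
  | zero =>
    intro q
    induction q with
    | zero => intro i j; norm_num
    | succ q ihq =>
      intro i j
      have hstep : mkR (uP^0 * vP^(q+1) * tP^i * xP^(j+1)) =
          mkR (uP^0 * vP^q * tP^(i+1) * xP^(j+1)) := by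
        apply mkR_eq
        have : uP^0 * vP^(q+1) * tP^i * xP^(j+1) - uP^0 * vP^q * tP^(i+1) * xP^(j+1) =
            (uP^0 * vP^q * tP^i * xP^j) * (vP * xP - tP * xP) := by ring
        rw [this]
        exact Ideal.mul_mem_left _ _ g3_mem
      rw [hstep, ihq (i+1) j, show 0+q+(i+1) = 0+(q+1)+i from by omega]
  | succ p ihp =>
    intro q i j
    have hstep : mkR (uP^(p+1) * vP^q * tP^i * xP^(j+1)) =
        mkR (uP^p * vP^q * tP^(i+1) * xP^(j+1)) := by
      apply mkR_eq
      have : uP^(p+1) * vP^q * tP^i * xP^(j+1) - uP^p * vP^q * tP^(i+1) * xP^(j+1) =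
          (uP^p * vP^q * tP^i * xP^j) * (uP * xP - tP * xP) := by ring
      rw [this]
      exact Ideal.mul_mem_left _ _ g2_mem
    rw [hstep, ihp q (i+1) j, show p+q+(i+1) = (p+1)+q+i from by omega]

lemma span_basFam : ⊤ ≤ Submodule.span ℤ (Set.range basFam) := by
  rintro r -
  obtain ⟨f, rfl⟩ := Ideal.Quotient.mk_surjective (I := relIdeal) r
  show mkR f ∈ _
  induction f using MvPolynomial.induction_on' with
  | monomial d c =>
    have h1 : (monomial d c : MvPolynomial (Fin 4) ℤ) = c • monomial d 1 := by
      rw [MvPolynomial.smul_monomial, smul_eq_mul, mul_one]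
    rw [h1, map_zsmul]
    apply Submodule.smul_mem
    rw [← quad_eta d, monomial_quad]
    rcases hj : d 3 with _ | j
    · have : mkR (uP^(d 0) * vP^(d 1) * tP^(d 2) * xP^0) = basFam (.inl (d 0, d 1, d 2)) := by
        rw [basFam_eq]; norm_num [polyOf]
      rw [this]
      exact Submodule.subset_span ⟨_, rfl⟩
    · rw [red_u]
      exact key_tx j _
  | add f1 f2 h1 h2 =>
    rw [map_add]
    exact add_mem h1 h2

theorem basFam_isBasis :
    ∃ b : Module.Basis ((ℕ × ℕ × ℕ) ⊕ ℕ ⊕ {i : ℕ // 2 ≤ i}) ℤ RRing, ∀ i, b i = basFam i := by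
  exact ⟨Module.Basis.mk li_basFam span_basFam, fun i => Module.Basis.mk_apply _ _ i⟩

end
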